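/- Let X be a Hausdorff space, φ : X → X continuous, and A ⊆ X. Suppose a ∈ A is a fixed point of φ and there exists a sequence (x_n) in X with x_n → a, x_0 ∉ A, and φ(x_{n+1}) = x_n for all n. Then for every finite family F of continuous self-maps of X containing φ, A is not a strict attractor of the IFS (X, F): there is no open neighborhood U of A such that F^n(S) → A (in the Vietoris topology on nonempty compact sets) for every nonempty compact S ⊆ U. -/

import Mathlib

open Filter Topology Set

/-- Convergence of a sequence of sets in the Vietoris topology: the sequence is
eventually in every subbasic Vietoris-open set containing the limit. -/
def VConv {X : Type*} [TopologicalSpace X] (A : ℕ → Set X) (L : Set X) : Prop :=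
  (∀ U : Set X, IsOpen U → L ⊆ U → ∀ᶠ n in atTop, A n ⊆ U) ∧
  (∀ U : Set X, IsOpen U → (L ∩ U).Nonempty → ∀ᶠ n in atTop, (A n ∩ U).Nonempty)

/-- Hutchinson (Barnsley–Hutchinson) operator of a family of maps. -/
def hutch {X : Type*} (F : Set (X → X)) (S : Set X) : Set X := ⋃ f ∈ F, f '' S

/-- Strict attractor of the IFS given by the family `F`. -/
def StrictAttractor {X : Type*} [TopologicalSpace X] (F : Set (X → X)) (A : Set X) : Prop :=
  A.Nonempty ∧ IsCompact A ∧ ∃ U : Set X, IsOpen U ∧ A ⊆ U ∧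
    ∀ S : Set X, S.Nonempty → IsCompact S → S ⊆ U →
      VConv (fun n => (hutch F)^[n] S) A

/-- Pointwise basin of a set for the IFS given by `F`. -/
def pBasin {X : Type*} [TopologicalSpace X] (F : Set (X → X)) (A : Set X) : Set X :=
  {x | VConv (fun n => (hutch F)^[n] {x}) A}

/-- Pointwise attractor of the IFS given by the family `F`. -/
def PtAttractor {X : Type*} [TopologicalSpace X] (F : Set (X → X)) (A : Set X) : Prop :=
  A.Nonempty ∧ IsCompact A ∧ A ⊆ interior (pBasin F A)

/-- Kuratowski lower limit. -/
def KLi {X : Type*} [TopologicalSpace X] (A : ℕ → Set X) : Set X :=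
  {x | ∀ U : Set X, IsOpen U → x ∈ U → ∀ᶠ n in atTop, (A n ∩ U).Nonempty}

/-- Kuratowski upper limit. -/
def KLs {X : Type*} [TopologicalSpace X] (A : ℕ → Set X) : Set X :=
  {x | ∀ U : Set X, IsOpen U → x ∈ U → ∃ᶠ n in atTop, (A n ∩ U).Nonempty}

theorem local_repellor_no_strict_attractor {X : Type*} [TopologicalSpace X] [T2Space X]
    (φ : X → X) (hφ : Continuous φ) (A : Set X) (a : X) (ha : a ∈ A)
    (hfix : φ a = a) (x : ℕ → X) (hx : Tendsto x atTop (𝓝 a))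
    (hx0 : x 0 ∉ A) (hrec : ∀ n, φ (x (n + 1)) = x n)
    (F : Set (X → X)) (hF : F.Finite) (hFcont : ∀ f ∈ F, Continuous f) (hφF : φ ∈ F) :
    ¬ StrictAttractor F A := by
  rintro ⟨-, -, U, hUopen, hAU, hconv⟩
  -- basic facts
  have hmono : Monotone (hutch F) := fun S T hST =>
    Set.iUnion₂_mono fun f _ => Set.image_mono (f := f) hST
  have hphi : ∀ T : Set X, φ '' T ⊆ hutch F T := fun T =>
    Set.subset_iUnion₂ (s := fun f (_ : f ∈ F) => f '' T) φ hφF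
  have hiter : ∀ n (T : Set X), φ^[n] '' T ⊆ (hutch F)^[n] T := by
    intro n
    induction n with
    | zero => intro T; simp
    | succ n ih =>
      intro T
      rw [Function.iterate_succ]
      calc (φ^[n] ∘ φ) '' T = φ^[n] '' (φ '' T) := by rw [Set.image_comp]
        _ ⊆ (hutch F)^[n] (φ '' T) := ih _
        _ ⊆ (hutch F)^[n] (hutch F T) := (hmono.iterate n) (hphi T)
        _ = ((hutch F)^[n] ∘ hutch F) T := rfl
  have hx0eq : ∀ n, φ^[n] (x n) = x 0 := by
    intro n
    induction n with
    | zero => rfl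
    | succ n ih => rw [Function.iterate_succ_apply, hrec n, ih]
  -- choose N with x n ∈ U for n ≥ N
  obtain ⟨N, hN⟩ := eventually_atTop.mp (hx.eventually (hUopen.mem_nhds (hAU ha)))
  set y : ℕ → X := fun n => x (n + N) with hy
  have hyt : Tendsto y atTop (𝓝 a) := hx.comp (tendsto_add_atTop_nat N)
  set S : Set X := insert a (Set.range y) with hS
  have hScomp : IsCompact S := hyt.isCompact_insert_range
  have hSU : S ⊆ U := by
    rintro z (rfl | ⟨n, rfl⟩)
    · exact hAU ha
    · exact hN _ (Nat.le_add_left N n)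
  obtain ⟨h1, -⟩ := hconv S ⟨a, Set.mem_insert _ _⟩ hScomp hSU
  have hV : IsOpen ({x 0}ᶜ : Set X) := isOpen_compl_singleton
  have hAV : A ⊆ ({x 0}ᶜ : Set X) := fun z hz hzx => hx0 (hzx ▸ hz)
  obtain ⟨M, hM⟩ := eventually_atTop.mp (h1 _ hV hAV)
  have hxS : x (M + N) ∈ S := Set.mem_insert_of_mem _ ⟨M, rfl⟩
  have : x 0 ∈ (hutch F)^[M + N] S :=
    hiter (M + N) S ⟨x (M + N), hxS, hx0eq (M + N)⟩
  exact hM (M + N) (Nat.le_add_right M N) this rfl
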